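/- Let (X, f, ε) be an exterior discrete semi-flow. If X is Lagrange stable at every point of PA(L(X)), then PA(L(X)) ⊆ D(X). -/
import Mathlib


open Set Topology

/-- The omega-limit set of a point `x` under the discrete semi-flow generated by `f`:
`Λ(x) = ⋂ₙ closure {f^[m] x : m ≥ n}`. -/
def Lambda {X : Type*} [TopologicalSpace X] (f : X → X) (x : X) : Set X :=
  ⋂ n : ℕ, closure ((fun m => f^[m] x) '' Set.Ici n)

/-- The omega-limit set of a subset `S`: `Λ(S) = ⋃_{x ∈ S} Λ(x)`. -/
def LambdaSet {X : Type*} [TopologicalSpace X] (f : X → X) (S : Set X) : Set X :=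
  ⋃ x ∈ S, Lambda f x

/-- The region of pseudo-attraction of `S`: `PA(S) = {x : Λ(x) ⊆ S}`. -/
def PA {X : Type*} [TopologicalSpace X] (f : X → X) (S : Set X) : Set X :=
  {x | Lambda f x ⊆ S}

/-- The region of weak-attraction of `S`: `WA(S) = {x : Λ(x) ∩ S ≠ ∅}`. -/
def WA {X : Type*} [TopologicalSpace X] (f : X → X) (S : Set X) : Set X :=
  {x | (Lambda f x ∩ S).Nonempty}

/-- The region of attraction of `S`: `A(S) = {x : ∅ ≠ Λ(x) ⊆ S}`. -/
def RA {X : Type*} [TopologicalSpace X] (f : X → X) (S : Set X) : Set X :=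
  {x | (Lambda f x).Nonempty ∧ Lambda f x ⊆ S}

/-- `X` is (positively) Lagrange stable at `x` if the closure of the trajectory of `x`
is compact. -/
def LagrangeStableAt {X : Type*} [TopologicalSpace X] (f : X → X) (x : X) : Prop :=
  IsCompact (closure (Set.range fun n : ℕ => f^[n] x))

/-- An externology on a topological space: a nonempty family of open sets closed under
finite intersections such that any open set containing a member belongs to the family. -/
def IsExternology {X : Type*} [TopologicalSpace X] (ε : Set (Set X)) : Prop :=
  ε.Nonempty ∧ (∀ E ∈ ε, IsOpen E) ∧ (∀ E ∈ ε, ∀ F ∈ ε, E ∩ F ∈ ε) ∧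
    (∀ E ∈ ε, ∀ U : Set X, IsOpen U → E ⊆ U → U ∈ ε)

/-- The limit space of an externology: `L(X) = ⋂_{E ∈ ε} E`. -/
def limitSpace {X : Type*} (ε : Set (Set X)) : Set X := ⋂ E ∈ ε, E

/-- The bar-limit space of an externology: `L̄(X) = ⋂_{E ∈ ε} closure E`. -/
def barLimit {X : Type*} [TopologicalSpace X] (ε : Set (Set X)) : Set X :=
  ⋂ E ∈ ε, closure E

/-- The region of pseudo-attraction of the externology:
`D(X) = {x : ∀ E ∈ ε, f^[m] x ∈ E for all large m}`. -/
def Dregion {X : Type*} (f : X → X) (ε : Set (Set X)) : Set X :=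
  {x | ∀ E ∈ ε, ∃ n : ℕ, ∀ m ≥ n, f^[m] x ∈ E}

/-- The region of pseudo-bar-attraction of the externology:
`D̄(X) = {x : ∀ E ∈ ε, f^[m] x ∈ closure E for all large m}`. -/
def Dbar {X : Type*} [TopologicalSpace X] (f : X → X) (ε : Set (Set X)) : Set X :=
  {x | ∀ E ∈ ε, ∃ n : ℕ, ∀ m ≥ n, f^[m] x ∈ closure E}

/-- A right-absorbing open subset: an open set that eventually contains the trajectory
of every point. -/
def RightAbsorbing {X : Type*} [TopologicalSpace X] (f : X → X) (E : Set X) : Prop :=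
  IsOpen E ∧ ∀ y : X, ∃ n : ℕ, ∀ m ≥ n, f^[m] y ∈ E

/-- A point `x` is periodic if `f^[n] x = x` for some `n ≥ 1`. -/
def IsPeriodicPoint {X : Type*} (f : X → X) (x : X) : Prop := ∃ n ≥ 1, f^[n] x = x

theorem stmt9 {X : Type*} [TopologicalSpace X] (f : X → X) (hf : Continuous f)
    (ε : Set (Set X)) (hε : IsExternology ε) (hflow : ∀ E ∈ ε, f ⁻¹' E ∈ ε)
    (hL : ∀ x ∈ PA f (limitSpace ε), LagrangeStableAt f x) :
    PA f (limitSpace ε) ⊆ Dregion f ε := by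
  intro x hx E hE
  by_contra hcon
  push_neg at hcon
  -- infinitely many m with f^[m] x ∉ E
  have hinf : ∀ n : ℕ, ∃ m ≥ n, f^[m] x ∉ E := by
    intro n
    obtain ⟨m, hm, hmE⟩ := hcon n
    exact ⟨m, hm, hmE⟩
  have hK := hL x hx
  set C : ℕ → Set X := fun n => closure ((fun m => f^[m] x) '' Set.Ici n) ∩ Eᶜ with hC
  have hEopen : IsOpen E := hε.2.1 E hE
  have hCclosed : ∀ n, IsClosed (C n) := fun n =>
    isClosed_closure.inter hEopen.isClosed_compl
  have hCsub : ∀ n, C n ⊆ closure (Set.range fun k : ℕ => f^[k] x) := by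
    intro n y hy
    exact closure_mono (by rintro z ⟨m, _, rfl⟩; exact ⟨m, rfl⟩) hy.1
  have hCcomp : ∀ n, IsCompact (C n) := fun n =>
    hK.of_isClosed_subset (hCclosed n) (hCsub n)
  have hCne : ∀ n, (C n).Nonempty := by
    intro n
    obtain ⟨m, hm, hmE⟩ := hinf n
    exact ⟨f^[m] x, subset_closure ⟨m, hm, rfl⟩, hmE⟩
  have hanti : Antitone C := by
    intro a b hab
    exact Set.inter_subset_inter_left _
      (closure_mono (Set.image_mono (Set.Ici_subset_Ici.mpr hab)))
  have hdir : Directed (· ⊇ ·) C := hanti.directed_ge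
  have hne : (⋂ n, C n).Nonempty :=
    IsCompact.nonempty_iInter_of_directed_nonempty_isCompact_isClosed C hdir hCne hCcomp hCclosed
  obtain ⟨y, hy⟩ := hne
  have hyL : y ∈ Lambda f x := by
    refine Set.mem_iInter.mpr fun n => ?_
    exact (Set.mem_iInter.mp hy n).1
  have hyE : y ∈ E := by
    have := hx hyL
    have : y ∈ ⋂ F ∈ ε, F := this
    exact Set.mem_iInter₂.mp this E hE
  exact (Set.mem_iInter.mp hy 0).2 hyE
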